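/- Let Y and Z be topological spaces and suppose Z is a T0 space. Then C(Y,Z) equipped with any of the topologies t_co^Z, t_1^Z, or t_{1,s}^Z is a T0 space. -/

import Mathlib

open Set TopologicalSpace

/-- The family O_Z(Y) of preimages of open sets under continuous maps. -/
def OZ (Y Z : Type*) [TopologicalSpace Y] [TopologicalSpace Z] : Set (Set Y) :=
  {s | ∃ (f : ContinuousMap Y Z) (U : Set Z), IsOpen U ∧ s = f ⁻¹' U}

/-- The Z-topology τ_Y^Z on Y, generated by the subbasis O_Z(Y). -/
def zTop (Y Z : Type*) [TopologicalSpace Y] [TopologicalSpace Z] : TopologicalSpace Y :=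
  TopologicalSpace.generateFrom (OZ Y Z)

/-- K is Z-compact if K is compact in (Y, τ_Y^Z). -/
def IsZCompact (Y Z : Type*) [TopologicalSpace Y] [TopologicalSpace Z] (K : Set Y) : Prop :=
  @IsCompact Y (zTop Y Z) K

/-- The Z-compact open topology on C(Y,Z). -/
def tcoZ (Y Z : Type*) [TopologicalSpace Y] [TopologicalSpace Z] :
    TopologicalSpace (ContinuousMap Y Z) :=
  TopologicalSpace.generateFrom
    {S | ∃ (K : Set Y) (U : Set Z), IsZCompact Y Z K ∧ IsOpen U ∧
      S = {f : ContinuousMap Y Z | f '' K ⊆ U}}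

/-- The compact open topology on C(Y,Z). -/
def tco (Y Z : Type*) [TopologicalSpace Y] [TopologicalSpace Z] :
    TopologicalSpace (ContinuousMap Y Z) :=
  TopologicalSpace.generateFrom
    {S | ∃ (K : Set Y) (U : Set Z), IsCompact K ∧ IsOpen U ∧
      S = {f : ContinuousMap Y Z | f '' K ⊆ U}}

/-- Membership in the Z-Scott family τ_1^Z on O(Y). -/
def Tau1 (Y Z : Type*) [TopologicalSpace Y] [TopologicalSpace Z] (H : Set (Set Y)) : Prop :=
  (∀ s ∈ H, IsOpen s) ∧
  (∀ s ∈ H, s ∈ OZ Y Z → ∀ V : Set Y, IsOpen V → s ⊆ V → V ∈ H) ∧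
  (∀ C ⊆ OZ Y Z, ⋃₀ C ∈ H → ∃ F ⊆ C, F.Finite ∧ ⋃₀ F ∈ H)

/-- Membership in the strong Z-Scott family τ_{1,s}^Z on O(Y). -/
def Tau1s (Y Z : Type*) [TopologicalSpace Y] [TopologicalSpace Z] (H : Set (Set Y)) : Prop :=
  (∀ s ∈ H, IsOpen s) ∧
  (∀ s ∈ H, s ∈ OZ Y Z → ∀ V : Set Y, IsOpen V → s ⊆ V → V ∈ H) ∧
  (∀ C ⊆ OZ Y Z, ⋃₀ C = Set.univ → ∃ F ⊆ C, F.Finite ∧ ⋃₀ F ∈ H)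

/-- Scott open families of open sets of Y. -/
def ScottOpen (Y : Type*) [TopologicalSpace Y] (H : Set (Set Y)) : Prop :=
  (∀ s ∈ H, IsOpen s) ∧
  (∀ s ∈ H, ∀ V : Set Y, IsOpen V → s ⊆ V → V ∈ H) ∧
  (∀ C : Set (Set Y), (∀ c ∈ C, IsOpen c) → ⋃₀ C ∈ H → ∃ F ⊆ C, F.Finite ∧ ⋃₀ F ∈ H)

/-- Strong Scott open families of open sets of Y. -/
def StrongScottOpen (Y : Type*) [TopologicalSpace Y] (H : Set (Set Y)) : Prop :=
  (∀ s ∈ H, IsOpen s) ∧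
  (∀ s ∈ H, ∀ V : Set Y, IsOpen V → s ⊆ V → V ∈ H) ∧
  (∀ C : Set (Set Y), (∀ c ∈ C, IsOpen c) → ⋃₀ C = Set.univ →
    ∃ F ⊆ C, F.Finite ∧ ⋃₀ F ∈ H)

/-- The topology t_1^Z on C(Y,Z). -/
def t1Z (Y Z : Type*) [TopologicalSpace Y] [TopologicalSpace Z] :
    TopologicalSpace (ContinuousMap Y Z) :=
  TopologicalSpace.generateFrom
    {S | ∃ (H : Set (Set Y)) (U : Set Z), Tau1 Y Z H ∧ IsOpen U ∧
      S = {f : ContinuousMap Y Z | f ⁻¹' U ∈ H}}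

/-- The topology t_{1,s}^Z on C(Y,Z). -/
def t1sZ (Y Z : Type*) [TopologicalSpace Y] [TopologicalSpace Z] :
    TopologicalSpace (ContinuousMap Y Z) :=
  TopologicalSpace.generateFrom
    {S | ∃ (H : Set (Set Y)) (U : Set Z), Tau1s Y Z H ∧ IsOpen U ∧
      S = {f : ContinuousMap Y Z | f ⁻¹' U ∈ H}}

/-- The Isbell topology on C(Y,Z). -/
def tIs (Y Z : Type*) [TopologicalSpace Y] [TopologicalSpace Z] :
    TopologicalSpace (ContinuousMap Y Z) :=
  TopologicalSpace.generateFrom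
    {S | ∃ (H : Set (Set Y)) (U : Set Z), ScottOpen Y H ∧ IsOpen U ∧
      S = {f : ContinuousMap Y Z | f ⁻¹' U ∈ H}}

/-- The strong Isbell topology on C(Y,Z). -/
def tsIs (Y Z : Type*) [TopologicalSpace Y] [TopologicalSpace Z] :
    TopologicalSpace (ContinuousMap Y Z) :=
  TopologicalSpace.generateFrom
    {S | ∃ (H : Set (Set Y)) (U : Set Z), StrongScottOpen Y H ∧ IsOpen U ∧
      S = {f : ContinuousMap Y Z | f ⁻¹' U ∈ H}}

/-- A topology t on C(Y,Z) is admissible if the evaluation map is continuous. -/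
def Admissible (Y Z : Type*) [TopologicalSpace Y] [TopologicalSpace Z]
    (t : TopologicalSpace (ContinuousMap Y Z)) : Prop :=
  @Continuous (ContinuousMap Y Z × Y) Z (@instTopologicalSpaceProd _ _ t _) _
    fun p => p.1 p.2

/-- B is bounded in (X, t): every t-open cover of X has a finite subfamily covering B. -/
def BoundedIn {X : Type*} (t : TopologicalSpace X) (B : Set X) : Prop :=
  ∀ C : Set (Set X), (∀ c ∈ C, @IsOpen X t c) → ⋃₀ C = Set.univ →
    ∃ F ⊆ C, F.Finite ∧ B ⊆ ⋃₀ F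


/-- Y is corecompact: each point has, inside each open neighborhood U, a smaller open
neighborhood that is bounded in the subspace U of Y. -/
def Corecompact (Y : Type*) [inst : TopologicalSpace Y] : Prop :=
  ∀ y : Y, ∀ U : Set Y, IsOpen U → y ∈ U →
    ∃ V : Set Y, IsOpen V ∧ y ∈ V ∧ V ⊆ U ∧
      BoundedIn (TopologicalSpace.induced (Subtype.val : U → Y) inst)
        ((Subtype.val : U → Y) ⁻¹' V)

/-- Y is locally bounded. -/
def LocallyBounded (Y : Type*) [inst : TopologicalSpace Y] : Prop :=
  ∀ y : Y, ∀ U : Set Y, IsOpen U → y ∈ U →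
    ∃ V : Set Y, IsOpen V ∧ y ∈ V ∧ V ⊆ U ∧ BoundedIn inst V

/-- Y is locally Z-bounded. -/
def LocallyZBounded (Y Z : Type*) [TopologicalSpace Y] [TopologicalSpace Z] : Prop :=
  ∀ y : Y, ∀ U : Set Y, IsOpen U → y ∈ U →
    ∃ s ∈ OZ Y Z, y ∈ s ∧ s ⊆ U ∧ BoundedIn (zTop Y Z) s

/-- A << U : A is bounded in the set U endowed with the subspace topology
inherited from (Y, τ_Y^Z). -/
def ZWayBelow (Y Z : Type*) [TopologicalSpace Y] [TopologicalSpace Z] (A U : Set Y) : Prop :=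
  BoundedIn (TopologicalSpace.induced (Subtype.val : U → Y) (zTop Y Z))
    ((Subtype.val : U → Y) ⁻¹' A)

/-- Y is Z-corecompact. -/
def ZCorecompact (Y Z : Type*) [TopologicalSpace Y] [TopologicalSpace Z] : Prop :=
  ∀ y : Y, ∀ U : Set Y, IsOpen U → y ∈ U →
    ∃ s ∈ OZ Y Z, y ∈ s ∧ s ⊆ U ∧ ZWayBelow Y Z s U

/-- The topology on O(Y) generated by the sets <K> = { U open : K ⊆ U }, K compact. -/
def kTop (Y : Type*) [TopologicalSpace Y] : TopologicalSpace (TopologicalSpace.Opens Y) :=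
  TopologicalSpace.generateFrom
    {S | ∃ K : Set Y, IsCompact K ∧ S = {U : TopologicalSpace.Opens Y | K ⊆ (U : Set Y)}}

lemma oz_open {Y Z : Type*} [TopologicalSpace Y] [TopologicalSpace Z] {s : Set Y}
    (hs : s ∈ OZ Y Z) : IsOpen s := by
  obtain ⟨f, U, hU, rfl⟩ := hs
  exact hU.preimage f.continuous

theorem stmt9 (Y Z : Type*) [TopologicalSpace Y] [TopologicalSpace Z] [T0Space Z] :
    @T0Space (ContinuousMap Y Z) (tcoZ Y Z) ∧
    @T0Space (ContinuousMap Y Z) (t1Z Y Z) ∧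
    @T0Space (ContinuousMap Y Z) (t1sZ Y Z) := by
  have key : ∀ f g : ContinuousMap Y Z, f ≠ g →
      ∃ (y : Y) (U : Set Z), IsOpen U ∧ Xor (f y ∈ U) (g y ∈ U) := by
    intro f g hfg
    have : ∃ y, f y ≠ g y := by
      by_contra h
      push_neg at h
      exact hfg (ContinuousMap.ext h)
    obtain ⟨y, hy⟩ := this
    obtain ⟨U, hU, hx⟩ := (t0Space_iff_exists_isOpen_xor'_mem Z).mp ‹_› hy
    exact ⟨y, U, hU, hx⟩
  refine ⟨?_, ?_, ?_⟩
  · rw [@t0Space_iff_exists_isOpen_xor'_mem _ (tcoZ Y Z)]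
    intro f g hfg
    obtain ⟨y, U, hU, hx⟩ := key f g hfg
    refine ⟨{h : ContinuousMap Y Z | h '' {y} ⊆ U}, ?_, ?_⟩
    · exact TopologicalSpace.isOpen_generateFrom_of_mem
        ⟨{y}, U, @isCompact_singleton Y (zTop Y Z) y, hU, rfl⟩
    · simpa [Set.image_singleton, Set.singleton_subset_iff] using hx
  · rw [@t0Space_iff_exists_isOpen_xor'_mem _ (t1Z Y Z)]
    intro f g hfg
    obtain ⟨y, U, hU, hx⟩ := key f g hfg
    set H : Set (Set Y) := {V | IsOpen V ∧ y ∈ V} with hH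
    have hTau : Tau1 Y Z H := by
      refine ⟨fun s hs => hs.1, fun s hs _ V hV hsV => ⟨hV, hsV hs.2⟩, ?_⟩
      intro C hC hUC
      obtain ⟨c, hc, hyc⟩ := hUC.2
      exact ⟨{c}, Set.singleton_subset_iff.mpr hc, Set.finite_singleton c,
        by simpa using ⟨oz_open (hC hc), hyc⟩⟩
    refine ⟨{h : ContinuousMap Y Z | h ⁻¹' U ∈ H}, ?_, ?_⟩
    · exact TopologicalSpace.isOpen_generateFrom_of_mem ⟨H, U, hTau, hU, rfl⟩
    · have : ∀ h : ContinuousMap Y Z, h ⁻¹' U ∈ H ↔ h y ∈ U := fun h =>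
        ⟨fun hh => hh.2, fun hh => ⟨hU.preimage h.continuous, hh⟩⟩
      simpa [Set.mem_setOf_eq, this] using hx
  · rw [@t0Space_iff_exists_isOpen_xor'_mem _ (t1sZ Y Z)]
    intro f g hfg
    obtain ⟨y, U, hU, hx⟩ := key f g hfg
    set H : Set (Set Y) := {V | IsOpen V ∧ y ∈ V} with hH
    have hTau : Tau1s Y Z H := by
      refine ⟨fun s hs => hs.1, fun s hs _ V hV hsV => ⟨hV, hsV hs.2⟩, ?_⟩
      intro C hC hUC
      have : y ∈ ⋃₀ C := hUC ▸ Set.mem_univ y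
      obtain ⟨c, hc, hyc⟩ := this
      exact ⟨{c}, Set.singleton_subset_iff.mpr hc, Set.finite_singleton c,
        by simpa using ⟨oz_open (hC hc), hyc⟩⟩
    refine ⟨{h : ContinuousMap Y Z | h ⁻¹' U ∈ H}, ?_, ?_⟩
    · exact TopologicalSpace.isOpen_generateFrom_of_mem ⟨H, U, hTau, hU, rfl⟩
    · have : ∀ h : ContinuousMap Y Z, h ⁻¹' U ∈ H ↔ h y ∈ U := fun h =>
        ⟨fun hh => hh.2, fun hh => ⟨hU.preimage h.continuous, hh⟩⟩
      simpa [Set.mem_setOf_eq, this] using hx
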